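/- arXiv:2402.09261 — 2 statements merged into one kernel-verified Lean document; each statement's English description precedes it below -/
import Mathlib

section
/- Let X be a complex Banach space and let T ∈ L(X) be a left semi-Fredholm operator. Then T is a quasi-Fredholm operator. -/
noncomputable section

/-- The two-sided ideal `F₀(X)` of finite-rank operators in `L(X)`. -/
def finiteRankIdeal (X : Type*) [NormedAddCommGroup X] [NormedSpace ℂ X] :
    TwoSidedIdeal (X →L[ℂ] X) :=
  TwoSidedIdeal.mk'
    {F : X →L[ℂ] X | FiniteDimensional ℂ (LinearMap.range (F : X →ₗ[ℂ] X))}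
    (by
      show FiniteDimensional ℂ (LinearMap.range ((0 : X →L[ℂ] X) : X →ₗ[ℂ] X))
      rw [show LinearMap.range ((0 : X →L[ℂ] X) : X →ₗ[ℂ] X) = ⊥ by ext x; simp [eq_comm]]
      infer_instance)
    (by
      intro x y hx hy
      haveI : FiniteDimensional ℂ (LinearMap.range (x : X →ₗ[ℂ] X)) := hx
      haveI : FiniteDimensional ℂ (LinearMap.range (y : X →ₗ[ℂ] X)) := hy
      have hle : LinearMap.range ((x + y : X →L[ℂ] X) : X →ₗ[ℂ] X) ≤ LinearMap.range (x : X →ₗ[ℂ] X) ⊔ LinearMap.range (y : X →ₗ[ℂ] X) := by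
        rintro z ⟨w, rfl⟩
        exact Submodule.add_mem_sup (LinearMap.mem_range_self (x : X →ₗ[ℂ] X) w) (LinearMap.mem_range_self (y : X →ₗ[ℂ] X) w)
      exact Submodule.finiteDimensional_of_le hle)
    (by
      intro x hx
      haveI : FiniteDimensional ℂ (LinearMap.range (x : X →ₗ[ℂ] X)) := hx
      have hle : LinearMap.range ((-x : X →L[ℂ] X) : X →ₗ[ℂ] X) ≤ LinearMap.range (x : X →ₗ[ℂ] X) := by
        rintro z ⟨w, rfl⟩; exact ⟨-w, by simp⟩
      exact Submodule.finiteDimensional_of_le hle)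
    (by
      intro x y hy
      haveI : FiniteDimensional ℂ (LinearMap.range (y : X →ₗ[ℂ] X)) := hy
      haveI : FiniteDimensional ℂ (Submodule.map (x : X →ₗ[ℂ] X) (LinearMap.range (y : X →ₗ[ℂ] X))) :=
        Module.Finite.map _ _
      have hle : LinearMap.range ((x * y : X →L[ℂ] X) : X →ₗ[ℂ] X) ≤ Submodule.map (x : X →ₗ[ℂ] X) (LinearMap.range (y : X →ₗ[ℂ] X)) := by
        rintro z ⟨w, rfl⟩; exact ⟨y w, LinearMap.mem_range_self (y : X →ₗ[ℂ] X) w, rfl⟩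
      exact Submodule.finiteDimensional_of_le hle)
    (by
      intro x y hx
      haveI : FiniteDimensional ℂ (LinearMap.range (x : X →ₗ[ℂ] X)) := hx
      have hle : LinearMap.range ((x * y : X →L[ℂ] X) : X →ₗ[ℂ] X) ≤ LinearMap.range (x : X →ₗ[ℂ] X) := by
        rintro z ⟨w, rfl⟩; exact ⟨y w, rfl⟩
      exact Submodule.finiteDimensional_of_le hle)

/-- Restriction of a bounded operator to an invariant subspace, as a bounded
operator on that subspace. -/
def clmRestrict {X : Type*} [NormedAddCommGroup X] [NormedSpace ℂ X]
    (T : X →L[ℂ] X) (M : Submodule ℂ X) (h : ∀ x ∈ M, T x ∈ M) : M →L[ℂ] M where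
  toLinearMap := (T : X →ₗ[ℂ] X).restrict h
  cont := by
    show Continuous fun x : M => (⟨T x, h x x.2⟩ : M)
    exact Continuous.subtype_mk (T.continuous.comp continuous_subtype_val) _

/-- The set `Δ(T)` of stable iteration indices:
`Δ(T) = {n : ∀ m ≥ n, N(T) ∩ R(T^n) ⊆ N(T) ∩ R(T^m)}`. -/
def disSet {X : Type*} [NormedAddCommGroup X] [NormedSpace ℂ X] (T : X →L[ℂ] X) : Set ℕ :=
  {n | ∀ m, n ≤ m →
    (LinearMap.ker (T : X →ₗ[ℂ] X) ⊓ LinearMap.range ((T ^ n : X →L[ℂ] X) : X →ₗ[ℂ] X) : Submodule ℂ X) ≤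
      LinearMap.ker (T : X →ₗ[ℂ] X) ⊓ LinearMap.range ((T ^ m : X →L[ℂ] X) : X →ₗ[ℂ] X)}

/-- `T` is quasi-Fredholm of degree `d` : `dis(T) = d` (i.e. `d` is the least element of
`Δ(T)`), `N(T) ∩ R(T^d)` is a closed complemented subspace of `X`, and `R(T) + N(T^d)` is a
closed complemented subspace of `X`. -/
def IsQuasiFredholmOfDegree {X : Type*} [NormedAddCommGroup X] [NormedSpace ℂ X]
    (T : X →L[ℂ] X) (d : ℕ) : Prop :=
  IsLeast (disSet T) d ∧
    IsClosed ((LinearMap.ker (T : X →ₗ[ℂ] X) ⊓ LinearMap.range ((T ^ d : X →L[ℂ] X) : X →ₗ[ℂ] X) : Submodule ℂ X) : Set X) ∧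
    (LinearMap.ker (T : X →ₗ[ℂ] X) ⊓ LinearMap.range ((T ^ d : X →L[ℂ] X) : X →ₗ[ℂ] X)).ClosedComplemented ∧
    IsClosed ((LinearMap.range (T : X →ₗ[ℂ] X) ⊔ LinearMap.ker ((T ^ d : X →L[ℂ] X) : X →ₗ[ℂ] X) : Submodule ℂ X) : Set X) ∧
    (LinearMap.range (T : X →ₗ[ℂ] X) ⊔ LinearMap.ker ((T ^ d : X →L[ℂ] X) : X →ₗ[ℂ] X)).ClosedComplemented

/-- `T` is quasi-Fredholm if it is quasi-Fredholm of some degree `d`. -/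
def IsQuasiFredholm {X : Type*} [NormedAddCommGroup X] [NormedSpace ℂ X]
    (T : X →L[ℂ] X) : Prop :=
  ∃ d : ℕ, IsQuasiFredholmOfDegree T d

/-- Left semi-Fredholm: closed range, finite-dimensional kernel, and range complemented
(i.e. the range of a bounded projection). -/
def IsLeftSemiFredholm {Y : Type*} [NormedAddCommGroup Y] [NormedSpace ℂ Y]
    (S : Y →L[ℂ] Y) : Prop :=
  IsClosed ((LinearMap.range (S : Y →ₗ[ℂ] Y) : Submodule ℂ Y) : Set Y) ∧
    FiniteDimensional ℂ (LinearMap.ker (S : Y →ₗ[ℂ] Y)) ∧ (LinearMap.range (S : Y →ₗ[ℂ] Y)).ClosedComplemented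

/-- Right semi-Fredholm: closed range of finite codimension, and kernel complemented
(i.e. the range of a bounded projection). -/
def IsRightSemiFredholm {Y : Type*} [NormedAddCommGroup Y] [NormedSpace ℂ Y]
    (S : Y →L[ℂ] Y) : Prop :=
  IsClosed ((LinearMap.range (S : Y →ₗ[ℂ] Y) : Submodule ℂ Y) : Set Y) ∧
    FiniteDimensional ℂ (Y ⧸ LinearMap.range (S : Y →ₗ[ℂ] Y)) ∧ (LinearMap.ker (S : Y →ₗ[ℂ] Y)).ClosedComplemented

/-- Fredholm: closed range, finite-dimensional kernel, range of finite codimension. -/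
def IsFredholmOp {Y : Type*} [NormedAddCommGroup Y] [NormedSpace ℂ Y]
    (S : Y →L[ℂ] Y) : Prop :=
  IsClosed ((LinearMap.range (S : Y →ₗ[ℂ] Y) : Submodule ℂ Y) : Set Y) ∧
    FiniteDimensional ℂ (LinearMap.ker (S : Y →ₗ[ℂ] Y)) ∧ FiniteDimensional ℂ (Y ⧸ LinearMap.range (S : Y →ₗ[ℂ] Y))

/-- Regular operator: kernel and range are complemented (closed) subspaces. -/
def IsRegularOp {Y : Type*} [NormedAddCommGroup Y] [NormedSpace ℂ Y]
    (S : Y →L[ℂ] Y) : Prop :=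
  (LinearMap.ker (S : Y →ₗ[ℂ] Y)).ClosedComplemented ∧ (LinearMap.range (S : Y →ₗ[ℂ] Y)).ClosedComplemented

lemma range_pow_invariant {X : Type*} [NormedAddCommGroup X] [NormedSpace ℂ X]
    (T : X →L[ℂ] X) (n : ℕ) :
    ∀ x ∈ LinearMap.range ((T ^ n : X →L[ℂ] X) : X →ₗ[ℂ] X), T x ∈ LinearMap.range ((T ^ n : X →L[ℂ] X) : X →ₗ[ℂ] X) := by
  rintro x ⟨y, rfl⟩
  exact ⟨T y, by
    simp only [ContinuousLinearMap.coe_coe]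
    rw [← ContinuousLinearMap.mul_apply, ← ContinuousLinearMap.mul_apply, ← pow_succ,
      ← pow_succ']⟩

/-- B-Fredholm: for some `n`, `R(T^n)` is closed and the restriction of `T` to `R(T^n)`,
viewed as an operator from `R(T^n)` to `R(T^n)`, is a Fredholm operator. -/
def IsBFredholm {X : Type*} [NormedAddCommGroup X] [NormedSpace ℂ X]
    (T : X →L[ℂ] X) : Prop :=
  ∃ n : ℕ, IsClosed ((LinearMap.range ((T ^ n : X →L[ℂ] X) : X →ₗ[ℂ] X) : Submodule ℂ X) : Set X) ∧
    IsFredholmOp (clmRestrict T (LinearMap.range ((T ^ n : X →L[ℂ] X) : X →ₗ[ℂ] X)) (range_pow_invariant T n))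

/-- Left Drazin invertible element of a unital ring: there is an idempotent `p`
commuting with `a` such that `a * p` is nilpotent and `a + p` has a left inverse
commuting with `p`. -/
def IsLeftDrazinInvertible {A : Type*} [Ring A] (a : A) : Prop :=
  ∃ p : A, IsIdempotentElem p ∧ a * p = p * a ∧ IsNilpotent (a * p) ∧
    ∃ b : A, b * (a + p) = 1 ∧ b * p = p * b

/-- Right Drazin invertible element of a unital ring: there is an idempotent `p`
commuting with `a` such that `a * p` is nilpotent and `a + p` has a right inverse
commuting with `p`. -/
def IsRightDrazinInvertible {A : Type*} [Ring A] (a : A) : Prop :=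
  ∃ p : A, IsIdempotentElem p ∧ a * p = p * a ∧ IsNilpotent (a * p) ∧
    ∃ b : A, (a + p) * b = 1 ∧ b * p = p * b

/-- Drazin invertible element of a unital ring: there is an idempotent `p`
commuting with `a` such that `a * p` is nilpotent and `a + p` is invertible. -/
def IsDrazinInvertible {A : Type*} [Ring A] (a : A) : Prop :=
  ∃ p : A, IsIdempotentElem p ∧ a * p = p * a ∧ IsNilpotent (a * p) ∧ IsUnit (a + p)

end


open Submodule LinearMap

section Aux

variable {X : Type*} [NormedAddCommGroup X] [NormedSpace ℂ X]

/-- Extension of finite dimensionality from a submodule and its quotient. -/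
lemma aux_fd_of_submodule_quotient {V : Type*} [AddCommGroup V] [Module ℂ V]
    (p : Submodule ℂ V) [FiniteDimensional ℂ p] [FiniteDimensional ℂ (V ⧸ p)] :
    FiniteDimensional ℂ V := by
  have h := Submodule.rank_quotient_add_rank p
  have h1 : Module.rank ℂ (V ⧸ p) < Cardinal.aleph0 := Module.rank_lt_aleph0_iff.mpr ‹_›
  have h2 : Module.rank ℂ p < Cardinal.aleph0 := Module.rank_lt_aleph0_iff.mpr ‹_›
  have : Module.rank ℂ V < Cardinal.aleph0 := h ▸ Cardinal.add_lt_aleph0 h1 h2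
  exact Module.rank_lt_aleph0_iff.mp this

lemma aux_fd_of_ker_range {V W : Type*} [AddCommGroup V] [Module ℂ V]
    [AddCommGroup W] [Module ℂ W] (f : V →ₗ[ℂ] W)
    [FiniteDimensional ℂ (LinearMap.ker f)] [FiniteDimensional ℂ (LinearMap.range f)] :
    FiniteDimensional ℂ V := by
  haveI : FiniteDimensional ℂ (V ⧸ LinearMap.ker f) :=
    LinearEquiv.finiteDimensional f.quotKerEquivRange.symm
  exact aux_fd_of_submodule_quotient (LinearMap.ker f)

lemma aux_fd_ker_pow (T : X →L[ℂ] X) (hfd : FiniteDimensional ℂ (LinearMap.ker (T : X →ₗ[ℂ] X))) (n : ℕ) :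
    FiniteDimensional ℂ (LinearMap.ker ((T ^ n : X →L[ℂ] X) : X →ₗ[ℂ] X)) := by
  induction n with
  | zero =>
    rw [pow_zero]
    have : LinearMap.ker ((1 : X →L[ℂ] X) : X →ₗ[ℂ] X) = ⊥ := by ext x; simp
    rw [this]; infer_instance
  | succ n ih =>
    haveI := ih
    haveI := hfd
    set g : LinearMap.ker ((T ^ (n + 1) : X →L[ℂ] X) : X →ₗ[ℂ] X) →ₗ[ℂ] X :=
      ((T ^ n : X →L[ℂ] X) : X →ₗ[ℂ] X).domRestrict (LinearMap.ker ((T ^ (n + 1) : X →L[ℂ] X) : X →ₗ[ℂ] X)) with hg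
    have hker : FiniteDimensional ℂ (LinearMap.ker g) := by
      set h : LinearMap.ker g →ₗ[ℂ] LinearMap.ker ((T ^ n : X →L[ℂ] X) : X →ₗ[ℂ] X) :=
        LinearMap.codRestrict (LinearMap.ker ((T ^ n : X →L[ℂ] X) : X →ₗ[ℂ] X))
          ((LinearMap.ker ((T ^ (n + 1) : X →L[ℂ] X) : X →ₗ[ℂ] X)).subtype.comp (LinearMap.ker g).subtype)
          (fun x => by
            have := x.2
            simp only [LinearMap.mem_ker, hg, LinearMap.domRestrict_apply] at this
            simpa [LinearMap.mem_ker] using this) with hh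
      have hinj : Function.Injective h := by
        intro a b hab
        apply Subtype.ext; apply Subtype.ext
        have : ((h a : LinearMap.ker ((T ^ n : X →L[ℂ] X) : X →ₗ[ℂ] X)) : X) = ((h b : LinearMap.ker ((T ^ n : X →L[ℂ] X) : X →ₗ[ℂ] X)) : X) := by
          rw [hab]
        simpa [hh] using this
      exact FiniteDimensional.of_injective h hinj
    have hrange : FiniteDimensional ℂ (LinearMap.range g) := by
      have hle : LinearMap.range g ≤ LinearMap.ker (T : X →ₗ[ℂ] X) := by
        rintro y ⟨⟨x, hx⟩, rfl⟩
        simp only [LinearMap.mem_ker] at hx ⊢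
        simp only [hg, LinearMap.domRestrict_apply, ContinuousLinearMap.coe_coe]
        have : (T ^ (n + 1)) x = T ((T ^ n) x) := by
          rw [pow_succ']; rfl
        rw [← this]; exact hx
      exact Submodule.finiteDimensional_of_le hle
    exact aux_fd_of_ker_range g

lemma aux_range_pow_antitone (T : X →L[ℂ] X) {n m : ℕ} (h : n ≤ m) :
    LinearMap.range ((T ^ m : X →L[ℂ] X) : X →ₗ[ℂ] X) ≤ LinearMap.range ((T ^ n : X →L[ℂ] X) : X →ₗ[ℂ] X) := by
  obtain ⟨c, rfl⟩ := Nat.exists_eq_add_of_le h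
  rintro x ⟨y, rfl⟩
  exact ⟨(T ^ c) y, by simp only [ContinuousLinearMap.coe_coe]; rw [← ContinuousLinearMap.mul_apply, ← pow_add]⟩

end Aux

section Aux2

variable {X : Type*} [NormedAddCommGroup X] [NormedSpace ℂ X]

/-- The sup of a closed complemented subspace and a finite-dimensional subspace is
closed complemented. -/
lemma aux_sup_closedComplemented (M F : Submodule ℂ X)
    (hM : M.ClosedComplemented) (hF : FiniteDimensional ℂ F) :
    (M ⊔ F).ClosedComplemented := by
  obtain ⟨f, hf⟩ := hM
  set P : X →L[ℂ] X := M.subtypeL.comp f with hPdef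
  have hPmem : ∀ x, P x ∈ M := fun x => (f x).2
  have hPid : ∀ x ∈ M, P x = x := fun x hx => congrArg Subtype.val (hf ⟨x, hx⟩)
  set Q : X →L[ℂ] X := ContinuousLinearMap.id ℂ X - P with hQdef
  have hQ : ∀ x, Q x = x - P x := fun x => rfl
  set F' : Submodule ℂ X := F.map (Q : X →ₗ[ℂ] X) with hF'def
  haveI : FiniteDimensional ℂ F := hF
  haveI : FiniteDimensional ℂ F' := Module.Finite.map F (Q : X →ₗ[ℂ] X)
  have hPF' : ∀ x ∈ F', P x = 0 := by
    rintro x ⟨c, hc, rfl⟩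
    show P (Q c) = 0
    rw [hQ, map_sub, hPid (P c) (hPmem c), sub_self]
  have hsup : M ⊔ F = M ⊔ F' := by
    apply le_antisymm
    · refine sup_le le_sup_left ?_
      intro x hx
      have : x = P x + Q x := by rw [hQ]; exact (add_sub_cancel _ _).symm
      rw [this]
      exact Submodule.add_mem _ (Submodule.mem_sup_left (hPmem x))
        (Submodule.mem_sup_right ⟨x, hx, rfl⟩)
    · refine sup_le le_sup_left ?_
      rintro x ⟨c, hc, rfl⟩
      show Q c ∈ M ⊔ F
      rw [hQ]
      exact Submodule.sub_mem _ (Submodule.mem_sup_right hc) (Submodule.mem_sup_left (hPmem c))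
  obtain ⟨g, hg⟩ := Submodule.ClosedComplemented.of_finiteDimensional F'
  set R : X →L[ℂ] X := P + F'.subtypeL.comp (g.comp Q) with hRdef
  have hRapp : ∀ x, R x = P x + (g (Q x) : X) := fun x => rfl
  have hRmem : ∀ x, R x ∈ M ⊔ F' := fun x => by
    rw [hRapp]
    exact Submodule.add_mem _ (Submodule.mem_sup_left (hPmem x))
      (Submodule.mem_sup_right (g (Q x)).2)
  have hgid : ∀ x ∈ F', (g x : X) = x := fun x hx => congrArg Subtype.val (hg ⟨x, hx⟩)
  have hRid : ∀ x ∈ M ⊔ F', R x = x := by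
    intro x hx
    obtain ⟨a, ha, b, hb, rfl⟩ := Submodule.mem_sup.mp hx
    have hRa : R a = a := by
      rw [hRapp, hPid a ha, hQ, hPid a ha, sub_self, map_zero]
      simp
    have hRb : R b = b := by
      rw [hRapp, hPF' b hb, hQ, hPF' b hb, sub_zero, hgid b hb, zero_add]
    rw [map_add, hRa, hRb]
  rw [hsup]
  exact ⟨R.codRestrict (M ⊔ F') hRmem, fun x => Subtype.ext (hRid x x.2)⟩

end Aux2

/-- Every left semi-Fredholm operator is quasi-Fredholm. -/
theorem leftSemiFredholm_isQuasiFredholm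
    (X : Type*) [NormedAddCommGroup X] [NormedSpace ℂ X] [CompleteSpace X]
    (T : X →L[ℂ] X) (hT : IsLeftSemiFredholm T) :
    IsQuasiFredholm T := by
  obtain ⟨hclosed, hker, hcompl⟩ := hT
  haveI : FiniteDimensional ℂ (LinearMap.ker (T : X →ₗ[ℂ] X)) := hker
  -- the decreasing sequence of subspaces
  set k : ℕ → Submodule ℂ X :=
    fun n => LinearMap.ker (T : X →ₗ[ℂ] X) ⊓ LinearMap.range ((T ^ n : X →L[ℂ] X) : X →ₗ[ℂ] X) with hk
  haveI hkfd : ∀ n, FiniteDimensional ℂ (k n) :=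
    fun n => Submodule.finiteDimensional_of_le inf_le_left
  have hkanti : ∀ {n m : ℕ}, n ≤ m → k m ≤ k n :=
    fun {n m} h => inf_le_inf_left _ (aux_range_pow_antitone T h)
  -- stabilization
  set r : ℕ → ℕ := fun n => Module.finrank ℂ (k n) with hr
  have hS : (Set.range r).Nonempty := ⟨r 0, 0, rfl⟩
  obtain ⟨n0, hn0⟩ : ∃ n0, r n0 = sInf (Set.range r) := Nat.sInf_mem hS
  have hstab : ∀ m, n0 ≤ m → k m = k n0 := by
    intro m hm
    have hle : k m ≤ k n0 := hkanti hm
    have h1 : r m ≤ r n0 := Submodule.finrank_mono hle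
    have h2 : r n0 ≤ r m := hn0 ▸ Nat.sInf_le ⟨m, rfl⟩
    exact Submodule.eq_of_le_of_finrank_eq hle (le_antisymm h1 h2)
  have hn0mem : n0 ∈ disSet T := fun m hm => le_of_eq (hstab m hm).symm
  have hne : (disSet T).Nonempty := ⟨n0, hn0mem⟩
  set d : ℕ := sInf (disSet T) with hd
  have hdmem : d ∈ disSet T := Nat.sInf_mem hne
  refine ⟨d, ⟨hdmem, fun b hb => Nat.sInf_le hb⟩, ?_, ?_, ?_, ?_⟩
  · haveI : FiniteDimensional ℂ
        (LinearMap.ker (T : X →ₗ[ℂ] X) ⊓ LinearMap.range ((T ^ d : X →L[ℂ] X) : X →ₗ[ℂ] X) : Submodule ℂ X) :=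
      Submodule.finiteDimensional_of_le inf_le_left
    exact Submodule.closed_of_finiteDimensional _
  · haveI : FiniteDimensional ℂ
        (LinearMap.ker (T : X →ₗ[ℂ] X) ⊓ LinearMap.range ((T ^ d : X →L[ℂ] X) : X →ₗ[ℂ] X) : Submodule ℂ X) :=
      Submodule.finiteDimensional_of_le inf_le_left
    exact Submodule.ClosedComplemented.of_finiteDimensional _
  · exact (aux_sup_closedComplemented _ _ hcompl (aux_fd_ker_pow T hker d)).isClosed
  · exact aux_sup_closedComplemented _ _ hcompl (aux_fd_ker_pow T hker d)
end

section
/- Let X be a complex Banach space and let T ∈ L(X) be a quasi-Fredholm operator of degree d. Then R(T^{d+1}) is a closed subspace of X. -/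
namespace QuasiFredholmProof

set_option maxHeartbeats 1600000



open LinearMap (ker range)

section Tools

variable {E F : Type*} [NormedAddCommGroup E] [NormedSpace ℂ E]
  [NormedAddCommGroup F] [NormedSpace ℂ F]

/-- If a continuous linear map has closed range, every point admits an approximate
kernel-correction with controlled norm. -/
lemma exists_bound_of_closedRange [CompleteSpace E] [CompleteSpace F] (S : E →L[ℂ] F)
    (h : IsClosed ((LinearMap.range S.toLinearMap : Submodule ℂ F) : Set F)) :
    ∃ C > 0, ∀ x : E, ∃ u, S u = 0 ∧ ‖x - u‖ ≤ C * ‖S x‖ := by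
  haveI : CompleteSpace (LinearMap.range S.toLinearMap) := h.completeSpace_coe
  set S' : E →L[ℂ] (LinearMap.range S.toLinearMap) :=
    S.codRestrict _ (fun x => LinearMap.mem_range_self _ x) with hS'
  have hsurj : Function.Surjective S' := by
    rintro ⟨y, x, rfl⟩
    exact ⟨x, rfl⟩
  obtain ⟨C, hC0, hC⟩ := S'.exists_preimage_norm_le hsurj
  refine ⟨C, hC0, fun x => ?_⟩
  obtain ⟨x', hx', hnorm⟩ := hC (S' x)
  have hSx' : S x' = S x := congrArg Subtype.val hx'
  refine ⟨x - x', by simp [map_sub, hSx'], ?_⟩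
  have : ‖S' x‖ = ‖S x‖ := rfl
  simpa [this] using hnorm

end Tools


section Tools

variable {E F : Type*} [NormedAddCommGroup E] [NormedSpace ℂ E]
  [NormedAddCommGroup F] [NormedSpace ℂ F]

/-- Conversely, an approximate kernel-correction bound implies closed range. -/
lemma closedRange_of_bound [CompleteSpace E] (S : E →L[ℂ] F) (C : ℝ)
    (h : ∀ x, ∃ u, S u = 0 ∧ ‖x - u‖ ≤ C * ‖S x‖) :
    IsClosed ((LinearMap.range S.toLinearMap : Submodule ℂ F) : Set F) := by
  set N : Submodule ℂ E := LinearMap.ker S.toLinearMap with hN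
  have hle : N ≤ LinearMap.ker (S : E →ₗ[ℂ] F) := le_rfl
  set j : E ⧸ N →ₗ[ℂ] F := N.liftQ (S : E →ₗ[ℂ] F) hle with hj
  have hjq : ∀ x : E, j (Submodule.Quotient.mk x) = S x := fun x => rfl
  have hcont : Continuous j := by
    rw [(Submodule.isOpenQuotientMap_mkQ N).isQuotientMap.continuous_iff]
    have : (j ∘ N.mkQ) = S := by
      ext x; exact hjq x
    rw [this]
    exact S.continuous
  set J : (E ⧸ N) →L[ℂ] F := ⟨j, hcont⟩ with hJ
  set C' : ℝ := max C 0 with hC'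
  have hCnn : (0:ℝ) ≤ C' := le_max_right _ _
  have h' : ∀ x, ∃ u, S u = 0 ∧ ‖x - u‖ ≤ C' * ‖S x‖ := by
    intro x
    obtain ⟨u, hu, hb⟩ := h x
    exact ⟨u, hu, hb.trans (mul_le_mul_of_nonneg_right (le_max_left _ _) (norm_nonneg _))⟩
  have hanti : AntilipschitzWith C'.toNNReal J := by
    apply J.antilipschitz_of_bound
    intro z
    obtain ⟨x, rfl⟩ := Submodule.Quotient.mk_surjective N z
    obtain ⟨u, hu, hb⟩ := h' x
    have hmk : (Submodule.Quotient.mk x : E ⧸ N) = Submodule.Quotient.mk (x - u) := by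
      rw [Submodule.Quotient.eq]
      simpa [hN, LinearMap.mem_ker, ContinuousLinearMap.coe_coe] using hu
    calc ‖(Submodule.Quotient.mk x : E ⧸ N)‖ ≤ ‖x - u‖ := by
          rw [hmk]; exact Submodule.Quotient.norm_mk_le _ _
      _ ≤ C' * ‖S x‖ := hb
      _ = (C'.toNNReal : ℝ) * ‖J (Submodule.Quotient.mk x)‖ := by
          rw [Real.coe_toNNReal C' hCnn]; rfl
  have hrange : Set.range J = ((LinearMap.range S.toLinearMap : Submodule ℂ F) : Set F) := by
    ext y
    constructor
    · rintro ⟨z, rfl⟩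
      obtain ⟨x, rfl⟩ := Submodule.Quotient.mk_surjective N z
      exact ⟨x, rfl⟩
    · rintro ⟨x, rfl⟩
      exact ⟨Submodule.Quotient.mk x, rfl⟩
  rw [← hrange]
  exact hanti.isClosed_range J.uniformContinuous

end Tools


universe u

variable {X : Type u} [NormedAddCommGroup X] [NormedSpace ℂ X]

/-- For a semi-regular operator, kernels of powers are contained in all ranges of powers. -/
lemma ker_pow_le_range_pow (T : X →L[ℂ] X)
    (hker : ∀ m : ℕ, LinearMap.ker T.toLinearMap ≤ LinearMap.range (T ^ m : _ →L[ℂ] _).toLinearMap) :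
    ∀ j m : ℕ, LinearMap.ker (T ^ j : _ →L[ℂ] _).toLinearMap ≤ LinearMap.range (T ^ m : _ →L[ℂ] _).toLinearMap := by
  intro j
  induction j with
  | zero =>
    intro m x hx
    rw [LinearMap.mem_ker] at hx
    rw [pow_zero] at hx
    have : x = 0 := hx
    simp [this]
  | succ j ih =>
    intro m x hx
    rw [LinearMap.mem_ker] at hx
    have h1 : (T ^ j) x ∈ LinearMap.ker T.toLinearMap := by
      rw [LinearMap.mem_ker, ContinuousLinearMap.coe_coe, ← ContinuousLinearMap.mul_apply, ← pow_succ']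
      exact hx
    obtain ⟨y, hy⟩ := hker (j + m) h1
    have hy' : (T ^ j) ((T ^ m) y) = (T ^ j) x := by
      rw [← ContinuousLinearMap.mul_apply, ← pow_add]; exact hy
    have h2 : x - (T ^ m) y ∈ LinearMap.ker (T ^ j : _ →L[ℂ] _).toLinearMap := by
      rw [LinearMap.mem_ker, ContinuousLinearMap.coe_coe, map_sub, hy', sub_self]
    obtain ⟨w, hw⟩ := ih m h2
    exact ⟨y + w, by simp only [ContinuousLinearMap.coe_coe] at hw ⊢; rw [map_add, hw]; abel⟩

/-- Bound propagation for powers of a semi-regular operator. -/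
lemma pow_bound_semiregular [CompleteSpace X] (T : X →L[ℂ] X)
    (hker : ∀ m : ℕ, LinearMap.ker T.toLinearMap ≤ LinearMap.range (T ^ m : _ →L[ℂ] _).toLinearMap)
    (hR : IsClosed ((LinearMap.range T.toLinearMap : Submodule ℂ X) : Set X)) :
    ∀ k : ℕ, 1 ≤ k → ∃ C : ℝ, ∀ x : X, ∃ u, (T ^ k) u = 0 ∧ ‖x - u‖ ≤ C * ‖(T ^ k) x‖ := by
  have hR1 : IsClosed ((LinearMap.range (T ^ 1 : _ →L[ℂ] _).toLinearMap : Submodule ℂ X) : Set X) := by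
    rw [pow_one]; exact hR
  obtain ⟨C1, hC10, hQ1⟩ := exists_bound_of_closedRange (T ^ 1) hR1
  intro k hk
  induction k, hk using Nat.le_induction with
  | base => exact ⟨C1, hQ1⟩
  | succ k hk ih =>
    obtain ⟨Ck, hQk⟩ := ih
    refine ⟨C1 * Ck, fun x => ?_⟩
    obtain ⟨u, hu0, hub⟩ := hQk (T x)
    -- u ∈ ker (T^k) ⊆ range (T^1) : u = T y with y ∈ ker (T^(k+1))
    obtain ⟨y, hy⟩ := ker_pow_le_range_pow T hker k 1 (LinearMap.mem_ker.2 hu0)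
    have hy' : T y = u := by rw [← pow_one T]; exact hy
    have hyker : (T ^ (k+1)) y = 0 := by
      rw [pow_succ, ContinuousLinearMap.mul_apply, hy', hu0]
    obtain ⟨v, hv0, hvb⟩ := hQ1 (x - y)
    have hv0' : T v = 0 := by rw [← pow_one T]; exact hv0
    refine ⟨y + v, ?_, ?_⟩
    · rw [map_add, hyker, pow_succ, ContinuousLinearMap.mul_apply, hv0', map_zero, add_zero]
    · have e1 : (T ^ 1) (x - y) = T x - u := by
        rw [pow_one, map_sub, hy']
      have e2 : ‖x - (y + v)‖ = ‖x - y - v‖ := by rw [sub_add_eq_sub_sub]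
      rw [e2]
      calc ‖x - y - v‖ ≤ C1 * ‖(T ^ 1) (x - y)‖ := hvb
        _ = C1 * ‖T x - u‖ := by rw [e1]
        _ ≤ C1 * (Ck * ‖(T ^ k) (T x)‖) := by
            apply mul_le_mul_of_nonneg_left _ (le_of_lt hC10)
            simpa [norm_sub_rev] using hub
        _ = C1 * Ck * ‖(T ^ (k+1)) x‖ := by
            rw [mul_assoc, pow_succ, ContinuousLinearMap.mul_apply]


lemma key (d : ℕ) : ∀ {X : Type u} [NormedAddCommGroup X] [NormedSpace ℂ X] [CompleteSpace X]
    (T : X →L[ℂ] X),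
    (∀ m : ℕ, d ≤ m →
      LinearMap.ker T.toLinearMap ⊓ LinearMap.range (T ^ d : _ →L[ℂ] _).toLinearMap ≤ LinearMap.ker T.toLinearMap ⊓ LinearMap.range (T ^ m : _ →L[ℂ] _).toLinearMap) →
    IsClosed ((LinearMap.range T.toLinearMap ⊔ LinearMap.ker (T ^ d : _ →L[ℂ] _).toLinearMap : Submodule ℂ X) : Set X) →
    IsClosed ((LinearMap.ker T.toLinearMap ⊓ LinearMap.range (T ^ d : _ →L[ℂ] _).toLinearMap : Submodule ℂ X) : Set X) →
    ∀ k : ℕ, d + 1 ≤ k → IsClosed ((LinearMap.range (T ^ k : _ →L[ℂ] _).toLinearMap : Submodule ℂ X) : Set X) := by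
  induction d with
  | zero =>
    intro X _ _ _ T hstab hC _ k hk
    have hker : ∀ m : ℕ, LinearMap.ker T.toLinearMap ≤ LinearMap.range (T ^ m : _ →L[ℂ] _).toLinearMap := by
      intro m x hx
      have := hstab m (Nat.zero_le m) (Submodule.mem_inf.2 ⟨hx, by
        refine ⟨x, ?_⟩
        rw [pow_zero]
        rfl⟩)
      exact (Submodule.mem_inf.1 this).2
    have hR : IsClosed ((LinearMap.range T.toLinearMap : Submodule ℂ X) : Set X) := by
      have : (LinearMap.range T.toLinearMap ⊔ LinearMap.ker (T ^ 0 : _ →L[ℂ] _).toLinearMap : Submodule ℂ X) = LinearMap.range T.toLinearMap := by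
        have hk0 : LinearMap.ker (T ^ 0 : X →L[ℂ] X).toLinearMap = ⊥ := by
          ext x
          simp only [LinearMap.mem_ker, Submodule.mem_bot, pow_zero]
          exact ⟨fun h => h, fun h => by rw [h]; rfl⟩
        rw [hk0, sup_bot_eq]
      rwa [this] at hC
    obtain ⟨C, hQ⟩ := pow_bound_semiregular T hker hR k hk
    exact closedRange_of_bound (T ^ k) C hQ
  | succ d ih =>
    intro X _ _ _ T hstab hC hM k hk
    -- quotient by N = ker T
    set N : Submodule ℂ X := LinearMap.ker T.toLinearMap with hNdef
    haveI hNclosed : IsClosed (N : Set X) := ContinuousLinearMap.isClosed_ker T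
    have hmkcont : Continuous (Submodule.Quotient.mk : X → X ⧸ N) :=
      (Submodule.isOpenQuotientMap_mkQ N).continuous
    have hTN : N ≤ N.comap (T : X →ₗ[ℂ] X) := by
      intro x hx
      have hx0 : T x = 0 := hx
      show T (T x) = 0
      rw [hx0, map_zero]
    have hTbarcont : Continuous (N.mapQ N (T : X →ₗ[ℂ] X) hTN) := by
      rw [(Submodule.isOpenQuotientMap_mkQ N).isQuotientMap.continuous_iff]
      have he : (⇑(N.mapQ N (T : X →ₗ[ℂ] X) hTN) ∘ ⇑N.mkQ)
          = (Submodule.Quotient.mk : X → X ⧸ N) ∘ ⇑T := by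
        funext x
        rfl
      rw [he]
      exact hmkcont.comp T.continuous
    set Tbar : (X ⧸ N) →L[ℂ] (X ⧸ N) :=
      ⟨N.mapQ N (T : X →ₗ[ℂ] X) hTN, hTbarcont⟩ with hTbardef
    have hcomm : ∀ x : X, Tbar (Submodule.Quotient.mk x) = Submodule.Quotient.mk (T x) :=
      fun x => rfl
    have hpow : ∀ (j : ℕ) (x : X),
        (Tbar ^ j) (Submodule.Quotient.mk x) = Submodule.Quotient.mk ((T ^ j) x) := by
      intro j
      induction j with
      | zero => intro x; rw [pow_zero, pow_zero]; rfl
      | succ j ihj =>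
        intro x
        rw [pow_succ', pow_succ', ContinuousLinearMap.mul_apply, ContinuousLinearMap.mul_apply,
          ihj x, hcomm]
    have hmk_eq_zero : ∀ x : X, ((Submodule.Quotient.mk x : X ⧸ N) = 0 ↔ T x = 0) := by
      intro x
      rw [Submodule.Quotient.mk_eq_zero]
      exact Iff.rfl
    have hmksurj : Function.Surjective (Submodule.Quotient.mk : X → X ⧸ N) :=
      Submodule.Quotient.mk_surjective N
    -- stability for Tbar at degree d
    have hstabbar : ∀ m : ℕ, d ≤ m →
        LinearMap.ker Tbar.toLinearMap ⊓ LinearMap.range (Tbar ^ d : _ →L[ℂ] _).toLinearMap ≤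
          LinearMap.ker Tbar.toLinearMap ⊓ LinearMap.range (Tbar ^ m : _ →L[ℂ] _).toLinearMap := by
      intro m hm z hz
      obtain ⟨hz1, hz2⟩ := Submodule.mem_inf.1 hz
      obtain ⟨w, hw⟩ := hz2
      obtain ⟨a, rfl⟩ := hmksurj w
      rw [ContinuousLinearMap.coe_coe, hpow d a] at hw
      have h0 : Tbar z = 0 := LinearMap.mem_ker.1 hz1
      rw [← hw, hcomm, hmk_eq_zero] at h0
      have hTd1a : T ((T ^ (d+1)) a) = 0 := by
        rw [pow_succ', ContinuousLinearMap.mul_apply]; exact h0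
      have hmem : (T ^ (d+1)) a ∈ LinearMap.ker T.toLinearMap ⊓ LinearMap.range (T ^ (d+1) : _ →L[ℂ] _).toLinearMap :=
        Submodule.mem_inf.2 ⟨LinearMap.mem_ker.2 hTd1a, ⟨a, rfl⟩⟩
      have hmem2 := hstab (m+1) (Nat.succ_le_succ hm) hmem
      obtain ⟨-, w', hw'⟩ := Submodule.mem_inf.1 hmem2
      refine Submodule.mem_inf.2 ⟨hz1, ⟨Submodule.Quotient.mk w', ?_⟩⟩
      rw [ContinuousLinearMap.coe_coe, hpow m w', ← hw, Submodule.Quotient.eq]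
      have hz0 : T ((T ^ m) w' - (T ^ d) a) = 0 := by
        rw [map_sub]
        have e1 : T ((T ^ m) w') = (T ^ (m+1)) w' := by
          rw [pow_succ', ContinuousLinearMap.mul_apply]
        have e2 : T ((T ^ d) a) = (T ^ (d+1)) a := by
          rw [pow_succ', ContinuousLinearMap.mul_apply]
        rw [e1, e2, show (T ^ (m+1)) w' = _ from hw', sub_self]
      exact LinearMap.mem_ker.2 hz0
    -- closedness of the C-space for Tbar
    have hqm := (Submodule.isOpenQuotientMap_mkQ N).isQuotientMap
    have hCbar : IsClosed ((LinearMap.range Tbar.toLinearMap ⊔ LinearMap.ker (Tbar ^ d : _ →L[ℂ] _).toLinearMap :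
        Submodule ℂ (X ⧸ N)) : Set (X ⧸ N)) := by
      rw [← hqm.isClosed_preimage]
      have hpre : ⇑N.mkQ ⁻¹' ((LinearMap.range Tbar.toLinearMap ⊔ LinearMap.ker (Tbar ^ d : _ →L[ℂ] _).toLinearMap :
          Submodule ℂ (X ⧸ N)) : Set (X ⧸ N))
          = ((LinearMap.range T.toLinearMap ⊔ LinearMap.ker (T ^ (d+1) : _ →L[ℂ] _).toLinearMap : Submodule ℂ X) : Set X) := by
        ext x
        simp only [Set.mem_preimage, Submodule.mkQ_apply, SetLike.mem_coe]
        constructor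
        · intro hx
          obtain ⟨z1, hz1, z2, hz2, hsum⟩ := Submodule.mem_sup.1 hx
          obtain ⟨w, hw⟩ := hz1
          obtain ⟨b, rfl⟩ := hmksurj w
          rw [ContinuousLinearMap.coe_coe, hcomm] at hw
          have hz2' : z2 = Submodule.Quotient.mk (x - T b) := by
            rw [Submodule.Quotient.mk_sub, hw, ← hsum]
            abel
          have hker2 : (T ^ (d+1)) (x - T b) = 0 := by
            have h1 : (Tbar ^ d) z2 = 0 := LinearMap.mem_ker.1 hz2
            rw [hz2', hpow d] at h1
            rw [hmk_eq_zero] at h1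
            rw [pow_succ', ContinuousLinearMap.mul_apply]
            -- goal : T ((T ^ d) (x - T b)) = 0
            exact h1
          exact Submodule.mem_sup.2 ⟨T b, ⟨b, rfl⟩, x - T b,
            LinearMap.mem_ker.2 hker2, by abel⟩
        · intro hx
          obtain ⟨z1, hz1, z2, hz2, hsum⟩ := Submodule.mem_sup.1 hx
          obtain ⟨b, rfl⟩ := hz1
          refine Submodule.mem_sup.2 ⟨Submodule.Quotient.mk (T b),
            ⟨Submodule.Quotient.mk b, hcomm b⟩, Submodule.Quotient.mk z2, ?_, ?_⟩
          · rw [LinearMap.mem_ker, ContinuousLinearMap.coe_coe, hpow d]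
            rw [hmk_eq_zero]
            have := LinearMap.mem_ker.1 hz2
            rw [ContinuousLinearMap.coe_coe, pow_succ', ContinuousLinearMap.mul_apply] at this
            exact this
          · rw [ContinuousLinearMap.coe_coe] at hsum; rw [← Submodule.Quotient.mk_add, hsum]
      rw [hpre]
      exact hC
    -- closedness of the M-space for Tbar
    have hMbar : IsClosed ((LinearMap.ker Tbar.toLinearMap ⊓ LinearMap.range (Tbar ^ d : _ →L[ℂ] _).toLinearMap :
        Submodule ℂ (X ⧸ N)) : Set (X ⧸ N)) := by
      rw [← hqm.isClosed_preimage]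
      have hpre : ⇑N.mkQ ⁻¹' ((LinearMap.ker Tbar.toLinearMap ⊓ LinearMap.range (Tbar ^ d : _ →L[ℂ] _).toLinearMap :
          Submodule ℂ (X ⧸ N)) : Set (X ⧸ N))
          = ⇑T ⁻¹' ((LinearMap.ker T.toLinearMap ⊓ LinearMap.range (T ^ (d+1) : _ →L[ℂ] _).toLinearMap :
            Submodule ℂ X) : Set X) := by
        ext x
        simp only [Set.mem_preimage, Submodule.mkQ_apply, SetLike.mem_coe,
          Submodule.mem_inf]
        constructor
        · rintro ⟨h1, h2⟩
          have hTx : T (T x) = 0 := by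
            have := LinearMap.mem_ker.1 h1
            rw [ContinuousLinearMap.coe_coe, hcomm, hmk_eq_zero] at this
            exact this
          obtain ⟨w, hw⟩ := h2
          obtain ⟨a, rfl⟩ := hmksurj w
          rw [ContinuousLinearMap.coe_coe, hpow d, Submodule.Quotient.eq, hNdef, LinearMap.mem_ker, ContinuousLinearMap.coe_coe] at hw
          have h5 : T ((T ^ d) a) - T x = 0 := by rw [← map_sub, hw]
          have h3 : T ((T ^ d) a) = T x := sub_eq_zero.1 h5
          have h6 : T x = (T ^ (d+1)) a := by
            rw [← h3, pow_succ', ContinuousLinearMap.mul_apply]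
          exact ⟨LinearMap.mem_ker.2 hTx, ⟨a, h6.symm⟩⟩
        · rintro ⟨h1, h2⟩
          constructor
          · rw [LinearMap.mem_ker, ContinuousLinearMap.coe_coe, hcomm, hmk_eq_zero]
            exact LinearMap.mem_ker.1 h1
          · obtain ⟨a, ha⟩ := h2; rw [ContinuousLinearMap.coe_coe] at ha
            refine ⟨Submodule.Quotient.mk a, ?_⟩
            rw [ContinuousLinearMap.coe_coe, hpow d, Submodule.Quotient.eq]
            have hz : T ((T ^ d) a - x) = 0 := by
              have e : T ((T ^ d) a) = (T ^ (d+1)) a := by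
                rw [pow_succ', ContinuousLinearMap.mul_apply]
              rw [map_sub, e, ha, sub_self]
            exact LinearMap.mem_ker.2 hz
      rw [hpre]
      exact (hM.preimage T.continuous)
    -- apply the induction hypothesis to the quotient operator
    have ihZ := ih Tbar hstabbar hCbar hMbar
    have hk' : d + 1 ≤ k := Nat.le_of_succ_le hk
    have hRbar : IsClosed ((LinearMap.range (Tbar ^ k : _ →L[ℂ] _).toLinearMap : Submodule ℂ (X ⧸ N)) : Set (X ⧸ N)) :=
      ihZ k hk'
    -- range T^k ⊔ N is closed downstairs
    have hpreRk : ⇑N.mkQ ⁻¹' ((LinearMap.range (Tbar ^ k : _ →L[ℂ] _).toLinearMap : Submodule ℂ (X ⧸ N)) : Set (X ⧸ N))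
        = ((LinearMap.range (T ^ k : _ →L[ℂ] _).toLinearMap ⊔ N : Submodule ℂ X) : Set X) := by
      ext x
      simp only [Set.mem_preimage, Submodule.mkQ_apply, SetLike.mem_coe]
      constructor
      · rintro ⟨w, hw⟩
        obtain ⟨a, rfl⟩ := hmksurj w
        rw [ContinuousLinearMap.coe_coe, hpow k, Submodule.Quotient.eq] at hw
        exact Submodule.mem_sup.2 ⟨(T ^ k) a, ⟨a, rfl⟩, -((T ^ k) a - x),
          Submodule.neg_mem _ hw, by abel⟩
      · intro hx
        obtain ⟨r, hr, n, hn, hsum⟩ := Submodule.mem_sup.1 hx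
        obtain ⟨a, rfl⟩ := hr
        refine ⟨Submodule.Quotient.mk a, ?_⟩
        rw [ContinuousLinearMap.coe_coe, hpow k, Submodule.Quotient.eq]
        have he : (T ^ k) a - x = -n := by rw [← hsum, ContinuousLinearMap.coe_coe]; abel
        rw [he]
        exact Submodule.neg_mem _ hn
    have hRkN : IsClosed ((LinearMap.range (T ^ k : _ →L[ℂ] _).toLinearMap ⊔ N : Submodule ℂ X) : Set X) := by
      rw [← hpreRk]
      exact hRbar.preimage ((Submodule.isOpenQuotientMap_mkQ N).continuous)
    -- open-mapping bound for Tbar^k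
    obtain ⟨C, hC0, hQ⟩ := exists_bound_of_closedRange (Tbar ^ k) hRbar
    -- key fact : kernel vectors in the closure of range T^k lie in range T^k
    have hstar : ∀ u' : X, T u' = 0 →
        u' ∈ closure ((LinearMap.range (T ^ k : _ →L[ℂ] _).toLinearMap : Submodule ℂ X) : Set X) →
        u' ∈ LinearMap.range (T ^ k : _ →L[ℂ] _).toLinearMap := by
      intro u' hu'ker hu'cl
      rw [mem_closure_iff_seq_limit] at hu'cl
      obtain ⟨y, hymem, hylim⟩ := hu'cl
      have hymem' : ∀ n, ∃ a, (T ^ k) a = y n := fun n => (hymem n : _)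
      choose a ha using hymem'
      have hmku' : (Submodule.Quotient.mk u' : X ⧸ N) = 0 := (hmk_eq_zero u').2 hu'ker
      have hynorm : ∀ n, ‖(Tbar ^ k) (Submodule.Quotient.mk (a n))‖ ≤ ‖y n - u'‖ := by
        intro n
        rw [hpow k, ha]
        calc ‖(Submodule.Quotient.mk (y n) : X ⧸ N)‖
            = ‖(Submodule.Quotient.mk (y n - u') : X ⧸ N)‖ := by
              rw [Submodule.Quotient.mk_sub, hmku', sub_zero]
          _ ≤ ‖y n - u'‖ := Submodule.Quotient.norm_mk_le N _
      have hsel : ∀ n : ℕ, ∃ a' : X, (T ^ (k+1)) a' = 0 ∧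
          ‖a n - a'‖ ≤ C * ‖y n - u'‖ + 1/((n:ℝ)+1) := by
        intro n
        obtain ⟨u, hu0, hub⟩ := hQ (Submodule.Quotient.mk (a n))
        obtain ⟨b, rfl⟩ := hmksurj u
        have hbker : (T ^ (k+1)) b = 0 := by
          rw [hpow k, hmk_eq_zero] at hu0
          rw [pow_succ', ContinuousLinearMap.mul_apply]
          exact hu0
        obtain ⟨m, hm_eq, hm_lt⟩ := Submodule.Quotient.norm_mk_lt
          (Submodule.Quotient.mk (a n - b) : X ⧸ N)
          (show (0:ℝ) < 1/((n:ℝ)+1) by positivity)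
        refine ⟨a n - m, ?_, ?_⟩
        · -- (a n - m) - b ∈ N, so T^{k+1} kills it
          have hmem : (a n - m) - b ∈ N := by
            have h1 : m - (a n - b) ∈ N := (Submodule.Quotient.eq N).1 hm_eq
            have h2 : (a n - m) - b = -(m - (a n - b)) := by abel
            rw [h2]
            exact Submodule.neg_mem _ h1
          have hTz : T ((a n - m) - b) = 0 := by
            rw [hNdef, LinearMap.mem_ker] at hmem
            exact hmem
          have h3 : (T ^ (k+1)) ((a n - m) - b) = 0 := by
            rw [pow_succ, ContinuousLinearMap.mul_apply, hTz, map_zero]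
          have h4 := map_sub (T ^ (k+1)) (a n - m) b
          rw [h3, hbker] at h4
          have h5 : (T ^ (k+1)) (a n - m) = 0 := by
            have := h4.symm
            rwa [sub_zero] at this
          exact h5
        · have he1 : ‖a n - (a n - m)‖ = ‖m‖ := by
            congr 1
            abel
          rw [he1]
          have he2 : ‖(Submodule.Quotient.mk (a n - b) : X ⧸ N)‖
              = ‖(Submodule.Quotient.mk (a n) : X ⧸ N) - Submodule.Quotient.mk b‖ := by
            rw [Submodule.Quotient.mk_sub]
          have hb1 : ‖(Submodule.Quotient.mk (a n - b) : X ⧸ N)‖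
              ≤ C * ‖y n - u'‖ := by
            rw [he2]
            exact hub.trans (mul_le_mul_of_nonneg_left (hynorm n) (le_of_lt hC0))
          have := hm_lt.le.trans (add_le_add hb1 le_rfl)
          exact this
      choose a' ha'ker ha'norm using hsel
      have hdiff : Filter.Tendsto (fun n => (T ^ k) (a n - a' n)) Filter.atTop (nhds 0) := by
        have hbound : ∀ n : ℕ, ‖(T ^ k) (a n - a' n)‖
            ≤ ‖(T ^ k : X →L[ℂ] X)‖ * (C * ‖y n - u'‖ + 1/((n:ℝ)+1)) := by
          intro n
          calc ‖(T ^ k) (a n - a' n)‖ ≤ ‖(T ^ k : X →L[ℂ] X)‖ * ‖a n - a' n‖ :=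
                ContinuousLinearMap.le_opNorm _ _
            _ ≤ _ := mul_le_mul_of_nonneg_left (ha'norm n) (norm_nonneg _)
        have h1 : Filter.Tendsto (fun n : ℕ => ‖y n - u'‖) Filter.atTop (nhds 0) :=
          tendsto_iff_norm_sub_tendsto_zero.1 hylim
        have h2 : Filter.Tendsto (fun n : ℕ => C * ‖y n - u'‖ + 1/((n:ℝ)+1))
            Filter.atTop (nhds 0) := by
          have := (h1.const_mul C).add tendsto_one_div_add_atTop_nhds_zero_nat
          simpa using this
        have h3 : Filter.Tendsto
            (fun n : ℕ => ‖(T ^ k : X →L[ℂ] X)‖ * (C * ‖y n - u'‖ + 1/((n:ℝ)+1)))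
            Filter.atTop (nhds 0) := by
          have := h2.const_mul ‖(T ^ k : X →L[ℂ] X)‖
          simpa [mul_comm] using this
        exact squeeze_zero_norm hbound h3
      have hwlim : Filter.Tendsto (fun n => (T ^ k) (a' n)) Filter.atTop (nhds u') := by
        have hfun : (fun n => (T ^ k) (a' n)) = fun n => y n - (T ^ k) (a n - a' n) := by
          funext n
          rw [map_sub, ha]
          abel
        rw [hfun]
        have := hylim.sub hdiff
        simpa using this
      have hmem2 : ∀ n, (T ^ k) (a' n) ∈
          ((LinearMap.ker T.toLinearMap ⊓ LinearMap.range (T ^ (d+1) : _ →L[ℂ] _).toLinearMap : Submodule ℂ X) : Set X) := by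
        intro n
        refine SetLike.mem_coe.2 (Submodule.mem_inf.2 ⟨?_, ?_⟩)
        · rw [LinearMap.mem_ker, ContinuousLinearMap.coe_coe, ← ContinuousLinearMap.mul_apply, ← pow_succ']
          exact ha'ker n
        · have hsplit : (T ^ k) = (T ^ (d+1)) * (T ^ (k - (d+1))) := by
            rw [← pow_add]
            congr 1
            omega
          rw [hsplit, ContinuousLinearMap.mul_apply]
          exact ⟨_, rfl⟩
      have hu'M : u' ∈
          ((LinearMap.ker T.toLinearMap ⊓ LinearMap.range (T ^ (d+1) : _ →L[ℂ] _).toLinearMap : Submodule ℂ X) : Set X) :=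
        hM.mem_of_tendsto hwlim (Filter.Eventually.of_forall hmem2)
      have hu'M' := hstab k hk' (SetLike.mem_coe.1 hu'M)
      exact (Submodule.mem_inf.1 hu'M').2
    -- conclude that range T^k is closed
    apply isClosed_of_closure_subset
    intro y hy
    have hy2 : y ∈ (LinearMap.range (T ^ k : _ →L[ℂ] _).toLinearMap ⊔ N : Submodule ℂ X) := by
      have hsub : closure ((LinearMap.range (T ^ k : _ →L[ℂ] _).toLinearMap : Submodule ℂ X) : Set X)
          ⊆ closure ((LinearMap.range (T ^ k : _ →L[ℂ] _).toLinearMap ⊔ N : Submodule ℂ X) : Set X) :=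
        closure_mono (SetLike.coe_subset_coe.2 le_sup_left)
      have := hsub hy
      rwa [hRkN.closure_eq] at this
    obtain ⟨r, hr, n, hn, hsum⟩ := Submodule.mem_sup.1 hy2
    obtain ⟨b, rfl⟩ := hr
    have hνker : T (y - (T ^ k) b) = 0 := by
      have he : y - (T ^ k) b = n := by rw [← hsum, ContinuousLinearMap.coe_coe]; abel
      rw [he]
      rw [hNdef, LinearMap.mem_ker] at hn
      exact hn
    have hνcl : y - (T ^ k) b ∈
        closure ((LinearMap.range (T ^ k : _ →L[ℂ] _).toLinearMap : Submodule ℂ X) : Set X) := by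
      have hyK : y ∈ (LinearMap.range (T ^ k : _ →L[ℂ] _).toLinearMap).topologicalClosure := by
        rw [← SetLike.mem_coe, Submodule.topologicalClosure_coe]
        exact hy
      have hbK : (T ^ k) b ∈ (LinearMap.range (T ^ k : _ →L[ℂ] _).toLinearMap).topologicalClosure :=
        Submodule.le_topologicalClosure _ ⟨b, rfl⟩
      have := Submodule.sub_mem _ hyK hbK
      rw [← SetLike.mem_coe, Submodule.topologicalClosure_coe] at this
      exact this
    obtain ⟨w, hw⟩ := hstar _ hνker hνcl
    refine SetLike.mem_coe.2 ⟨b + w, ?_⟩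
    rw [map_add, hw, ContinuousLinearMap.coe_coe]
    abel




end QuasiFredholmProof

/-- If `T` is quasi-Fredholm of degree `d`, then `R(T^{d+1})` is closed. -/
theorem range_pow_succ_closed_of_quasiFredholm
    (X : Type*) [NormedAddCommGroup X] [NormedSpace ℂ X] [CompleteSpace X]
    (T : X →L[ℂ] X) (d : ℕ) (hT : IsQuasiFredholmOfDegree T d) :
    IsClosed ((LinearMap.range ((T ^ (d + 1) : X →L[ℂ] X) : X →ₗ[ℂ] X) : Submodule ℂ X) : Set X) := by
  obtain ⟨⟨hmem, -⟩, hMclosed, -, hCclosed, -⟩ := hT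
  exact QuasiFredholmProof.key d T (fun m hm => hmem m hm) hCclosed hMclosed (d + 1) le_rfl
end
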